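/- For every nondegenerate interval J ⊆ ℝ and every ε, τ with 0 < ε < 1 and 0 < τ < 1, there exists a Lebesgue measurable function f : ℝ → [0,∞) such that: (1) ∫_{−∞}^{∞} f(x) dx ≤ ε; and (2) there exist finitely many closed intervals [a₁,b₁], …, [aₙ,bₙ] ⊆ J with aᵢ < bᵢ such that Σᵢ ∫_{aᵢ}^{bᵢ} f(x) dx > 1/ε and the intervals [aᵢ, aᵢ + τ(bᵢ − aᵢ)], i = 1, …, n, are mutually disjoint. -/

import Mathlib

open Filter Set Topology MeasureTheory

lemma icc_disjoint_of_lt {a b c d : ℝ} (h : b < c) :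
    Disjoint (Set.Icc a b) (Set.Icc c d) :=
  Set.disjoint_left.2 fun x hx hx' => absurd (hx.2.trans_lt h) (not_lt.2 hx'.1)

/-- The basic building block: a small nonnegative function concentrating a large
sum of integrals over intervals whose initial `τ`-portions are mutually disjoint. -/
theorem stmt_9 (J : Set ℝ) (hJ : J.OrdConnected) (c d : ℝ) (hc : c ∈ J) (hd : d ∈ J)
    (hcd : c < d) (ε τ : ℝ) (hε : 0 < ε) (hε1 : ε < 1) (hτ : 0 < τ) (hτ1 : τ < 1) :
    ∃ f : ℝ → ℝ, Measurable f ∧ (∀ x, 0 ≤ f x) ∧ MeasureTheory.Integrable f ∧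
      (∫ x, f x) ≤ ε ∧
      ∃ n : ℕ, ∃ a b : Fin n → ℝ,
        (∀ i, a i < b i ∧ Set.Icc (a i) (b i) ⊆ J) ∧
        (1 / ε < ∑ i, ∫ x in (a i)..(b i), f x) ∧
        Pairwise fun i j =>
          Disjoint (Set.Icc (a i) (a i + τ * (b i - a i)))
            (Set.Icc (a j) (a j + τ * (b j - a j))) := by
  set r : ℝ := (1 - τ) / 2 with hr_def
  have hr0 : 0 < r := by simp [hr_def]; linarith
  have hr1 : r < 1 := by simp [hr_def]; linarith
  have hrτ : r < 1 - τ := by simp [hr_def]; linarith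
  set n : ℕ := ⌈1 / ε ^ 2⌉₊ + 1 with hn_def
  set a : Fin n → ℝ := fun i => d - (d - c) * r ^ (i : ℕ) with ha_def
  set ℓ : ℝ := (d - c) * r ^ n with hℓ_def
  have hℓ0 : 0 < ℓ := mul_pos (by linarith) (pow_pos hr0 n)
  set m : ℝ := d - ℓ with hm_def
  have hmd : m < d := by simp [hm_def]; linarith
  set f : ℝ → ℝ := (Set.Ioc m d).indicator (fun _ => ε / ℓ) with hf_def
  have hεℓ : 0 ≤ ε / ℓ := div_nonneg hε.le hℓ0.le
  have hvol : (volume (Set.Ioc m d)).toReal = ℓ := by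
    rw [Real.volume_Ioc, ENNReal.toReal_ofReal (by linarith)]
    simp [hm_def]
  have hfmeas : Measurable f :=
    Measurable.indicator measurable_const measurableSet_Ioc
  have hfint : MeasureTheory.Integrable f := by
    rw [hf_def, MeasureTheory.integrable_indicator_iff measurableSet_Ioc]
    exact integrableOn_const (by rw [Real.volume_Ioc]; exact ENNReal.ofReal_ne_top)
  have hftot : (∫ x, f x) = ε := by
    rw [hf_def, MeasureTheory.integral_indicator measurableSet_Ioc,
      MeasureTheory.setIntegral_const, measureReal_def, hvol, smul_eq_mul, mul_div_cancel₀ _ hℓ0.ne']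
  -- each a i is below m
  have ham : ∀ i : Fin n, a i < m := by
    intro i
    simp only [ha_def, hm_def, hℓ_def, sub_lt_sub_iff_left]
    exact mul_lt_mul_of_pos_left (pow_lt_pow_right_of_lt_one₀ hr0 hr1 i.2) (by linarith)
  have had : ∀ i : Fin n, a i < d := fun i => (ham i).trans hmd
  have hac : ∀ i : Fin n, c ≤ a i := by
    intro i
    simp only [ha_def]
    nlinarith [pow_le_one₀ hr0.le hr1.le (n := (i : ℕ)), pow_pos hr0 (i : ℕ)]
  have haJ : ∀ i : Fin n, Set.Icc (a i) d ⊆ J := by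
    intro i
    have : a i ∈ J := hJ.out hc hd ⟨hac i, (had i).le⟩
    exact hJ.out this hd
  -- integral over each interval
  have hint : ∀ i : Fin n, (∫ x in (a i)..d, f x) = ε := by
    intro i
    rw [intervalIntegral.integral_of_le (had i).le, hf_def,
      MeasureTheory.setIntegral_indicator measurableSet_Ioc]
    have : Set.Ioc (a i) d ∩ Set.Ioc m d = Set.Ioc m d := by
      rw [Set.inter_eq_right]
      exact Set.Ioc_subset_Ioc (ham i).le le_rfl
    rw [this, MeasureTheory.setIntegral_const, measureReal_def, hvol, smul_eq_mul,
      mul_div_cancel₀ _ hℓ0.ne']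
  refine ⟨f, hfmeas, fun x => Set.indicator_nonneg (fun _ _ => hεℓ) x, hfint, hftot.le,
    n, a, fun _ => d, fun i => ⟨had i, haJ i⟩, ?_, ?_⟩
  · -- sum of integrals
    have hsum : (∑ i : Fin n, ∫ x in (a i)..d, f x) = n * ε := by
      rw [Finset.sum_congr rfl (fun i _ => hint i)]
      simp [mul_comm]
    rw [hsum]
    have h1 : (1 : ℝ) / ε ^ 2 ≤ ⌈1 / ε ^ 2⌉₊ := Nat.le_ceil _
    have h2 : (n : ℝ) = ⌈1 / ε ^ 2⌉₊ + 1 := by simp [hn_def]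
    rw [div_lt_iff₀ hε]
    have hn : 1 / ε ^ 2 + 1 ≤ (n : ℝ) := by rw [h2]; linarith
    have h3 : 1 / ε ^ 2 * (ε * ε) = 1 := by field_simp
    nlinarith [hn, h3, mul_pos hε hε]
  · -- pairwise disjointness
    have key : ∀ i j : Fin n, (i : ℕ) < (j : ℕ) →
        a i + τ * (d - a i) < a j := by
      intro i j hij
      have hai : a i = d - (d - c) * r ^ (i : ℕ) := rfl
      have haj : a j = d - (d - c) * r ^ (j : ℕ) := rfl
      have hpow : r ^ (j : ℕ) ≤ r ^ ((i : ℕ) + 1) :=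
        pow_le_pow_of_le_one hr0.le hr1.le hij
      have hpi : (0:ℝ) < r ^ (i : ℕ) := pow_pos hr0 _
      rw [hai, haj]
      have hrs : r ^ ((i : ℕ) + 1) = r ^ (i : ℕ) * r := pow_succ r (i : ℕ)
      have hA : (d - c) * r ^ (j : ℕ) ≤ (d - c) * (r ^ (i : ℕ) * r) := by
        rw [← hrs]; exact mul_le_mul_of_nonneg_left hpow (by linarith)
      have hB : (d - c) * r ^ (i : ℕ) * r < (d - c) * r ^ (i : ℕ) * (1 - τ) :=
        mul_lt_mul_of_pos_left hrτ (mul_pos (by linarith) hpi)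
      nlinarith [hA, hB]
    intro i j hij
    rcases lt_or_gt_of_ne (fun h : (i : ℕ) = (j : ℕ) => hij (Fin.ext h)) with h | h
    · exact icc_disjoint_of_lt (key i j h)
    · exact (icc_disjoint_of_lt (key j i h)).symm
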